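/- Let N ≥ 2 and T ≥ 1 be integers. For each a ∈ {1,…,N} let (X_{a,s})_{s≥1} be an i.i.d. sequence of random variables taking values in [0,1] with mean r_a, and let r̂_{a,s} := (1/s)·∑_{j=1}^{s} X_{a,j} for s ≥ 1 and r̂_{a,0} := 0. Then ∑_{t=1}^{T} Pr( ∃ a ∈ {1,…,N}, ∃ s ∈ {0,1,…,t−1} : |r_a − r̂_{a,s}| > √(3·ln(N·t)/(s+1)) ) ≤ π²/3. -/

import Mathlib

open MeasureTheory ProbabilityTheory Finset
open Real


lemma hoeffding_aux {p : ℝ} (hp0 : 0 ≤ p) (hp1 : p ≤ 1) (l : ℝ) :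
    1 - p + p * Real.exp l ≤ Real.exp (l * p + l ^ 2 / 8) := by
  rcases eq_or_lt_of_le hp0 with h0 | hp0'
  · simp only [← h0]
    simpa using Real.one_le_exp (by positivity)
  set g : ℝ → ℝ := fun x => 1 - p + p * Real.exp x with hgdef
  have hg : ∀ x, 0 < g x := fun x => by
    have := Real.exp_pos x
    simp only [hgdef]
    nlinarith
  set F : ℝ → ℝ := fun x => x * p + x ^ 2 / 8 - Real.log (g x) with hFdef
  set F' : ℝ → ℝ := fun x => p + x / 4 - p * Real.exp x / g x with hF'def
  have hgd : ∀ x, HasDerivAt g (p * Real.exp x) x := fun x => by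
    exact ((Real.hasDerivAt_exp x).const_mul p).const_add (1 - p)
  have hFd : ∀ x, HasDerivAt F (F' x) x := by
    intro x
    have h1 : HasDerivAt (fun x : ℝ => x * p + x ^ 2 / 8) (p + x / 4) x := by
      have := ((hasDerivAt_id x).mul_const p).add ((hasDerivAt_pow 2 x).div_const 8)
      exact this.congr_deriv (by push_cast; ring)
    have h2 : HasDerivAt (fun x => Real.log (g x)) (p * Real.exp x / g x) x :=
      (hgd x).log (hg x).ne'
    exact h1.sub h2
  have hF'd : ∀ x, HasDerivAt F'
      (1/4 - (p * Real.exp x * g x - p * Real.exp x * (p * Real.exp x)) / (g x) ^ 2) x := by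
    intro x
    have h1 : HasDerivAt (fun x : ℝ => p + x / 4) (1/4) x := by
      simpa using ((hasDerivAt_id x).div_const 4).const_add p
    have h2 : HasDerivAt (fun x => p * Real.exp x / g x)
        ((p * Real.exp x * g x - p * Real.exp x * (p * Real.exp x)) / (g x) ^ 2) x :=
      ((Real.hasDerivAt_exp x).const_mul p).div (hgd x) (hg x).ne'
    exact h1.sub h2
  have hF'' : ∀ x, 0 ≤ 1/4 - (p * Real.exp x * g x - p * Real.exp x * (p * Real.exp x)) / (g x) ^ 2 := by
    intro x
    have hgx := hg x
    rw [sub_nonneg, div_le_iff₀ (by positivity)]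
    obtain ⟨G, hG⟩ : ∃ G, g x = G := ⟨_, rfl⟩
    rw [hG] at hgx ⊢
    nlinarith [sq_nonneg (G - 2 * (p * Real.exp x))]
  have hF'mono : Monotone F' :=
    monotone_of_deriv_nonneg (fun x => (hF'd x).differentiableAt)
      (fun x => by rw [(hF'd x).deriv]; exact hF'' x)
  have hF'0 : F' 0 = 0 := by
    simp only [hF'def, hgdef, Real.exp_zero, mul_one]
    field_simp
    ring
  have hF0 : F 0 = 0 := by
    simp [hFdef, hgdef]
  have hFnonneg : ∀ x, 0 ≤ F x := by
    intro x
    rcases le_total 0 x with hx | hx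
    · have hmono : MonotoneOn F (Set.Ici 0) :=
        monotoneOn_of_deriv_nonneg (convex_Ici 0)
          (Continuous.continuousOn
            (Differentiable.continuous (fun y => (hFd y).differentiableAt)))
          (fun y _ => ((hFd y).differentiableAt).differentiableWithinAt)
          (fun y hy => by
            rw [(hFd y).deriv]
            have : F' 0 ≤ F' y := hF'mono (le_of_lt (by simpa using hy))
            linarith [hF'0 ▸ this])
      have := hmono (Set.self_mem_Ici) hx hx
      rw [hF0] at this; exact this
    · have hmono : AntitoneOn F (Set.Iic 0) :=
        antitoneOn_of_deriv_nonpos (convex_Iic 0)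
          (Continuous.continuousOn
            (Differentiable.continuous (fun y => (hFd y).differentiableAt)))
          (fun y _ => ((hFd y).differentiableAt).differentiableWithinAt)
          (fun y hy => by
            rw [(hFd y).deriv]
            have : F' y ≤ F' 0 := hF'mono (le_of_lt (by simpa using hy))
            linarith [hF'0 ▸ this])
      have := hmono hx (Set.self_mem_Iic) hx
      rw [hF0] at this; exact this
  have hlog : Real.log (g l) ≤ l * p + l ^ 2 / 8 := by
    have := hFnonneg l
    simp only [hFdef] at this
    linarith
  calc g l = Real.exp (Real.log (g l)) := (Real.exp_log (hg l)).symm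
    _ ≤ Real.exp (l * p + l ^ 2 / 8) := Real.exp_le_exp.mpr hlog


lemma exp_integrable {Ω : Type*} [MeasurableSpace Ω] (P : Measure Ω) [IsProbabilityMeasure P]
    (Y : Ω → ℝ) (hm : Measurable Y) (hv : ∀ ω, Y ω ∈ Set.Icc (0:ℝ) 1) (l : ℝ) :
    Integrable (fun ω => Real.exp (l * Y ω)) P := by
  refine Integrable.mono' (integrable_const (Real.exp |l|))
    ((hm.const_mul l).exp.aestronglyMeasurable) (ae_of_all _ fun ω => ?_)
  rw [Real.norm_eq_abs, Real.abs_exp]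
  apply Real.exp_le_exp.mpr
  calc l * Y ω ≤ |l * Y ω| := le_abs_self _
    _ = |l| * |Y ω| := abs_mul _ _
    _ ≤ |l| * 1 := by
        have h := hv ω
        have : |Y ω| ≤ 1 := by rw [abs_le]; constructor <;> linarith [h.1, h.2]
        exact mul_le_mul_of_nonneg_left this (abs_nonneg l)
    _ = |l| := mul_one _

lemma mgf_le_of_Icc {Ω : Type*} [MeasurableSpace Ω] (P : Measure Ω) [IsProbabilityMeasure P]
    (Y : Ω → ℝ) (hm : Measurable Y) (hv : ∀ ω, Y ω ∈ Set.Icc (0:ℝ) 1) (l : ℝ) :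
    mgf Y P l ≤ Real.exp (l * (∫ ω, Y ω ∂P) + l ^ 2 / 8) := by
  have hYint : Integrable Y P := by
    refine Integrable.mono' (integrable_const 1) hm.aestronglyMeasurable (ae_of_all _ fun ω => ?_)
    have h := hv ω
    rw [Real.norm_eq_abs, abs_le]; constructor <;> linarith [h.1, h.2]
  set p := ∫ ω, Y ω ∂P with hp
  have hp0 : 0 ≤ p := integral_nonneg fun ω => (hv ω).1
  have hp1 : p ≤ 1 := by
    calc p ≤ ∫ _, (1:ℝ) ∂P := integral_mono hYint (integrable_const 1) fun ω => (hv ω).2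
      _ = 1 := by simp
  have hpt : ∀ ω, Real.exp (l * Y ω) ≤ 1 - Y ω + Y ω * Real.exp l := by
    intro ω
    have h := hv ω
    have := convexOn_exp.2 (Set.mem_univ (0:ℝ)) (Set.mem_univ l)
      (show (0:ℝ) ≤ 1 - Y ω by linarith [h.2]) (show (0:ℝ) ≤ Y ω from h.1)
      (show (1 - Y ω) + Y ω = 1 by ring)
    simpa [smul_eq_mul, mul_comm] using this
  calc mgf Y P l = ∫ ω, Real.exp (l * Y ω) ∂P := rfl
    _ ≤ ∫ ω, (1 - Y ω + Y ω * Real.exp l) ∂P := by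
        refine integral_mono (exp_integrable P Y hm hv l) ?_ hpt
        exact ((integrable_const 1).sub hYint).add (hYint.mul_const _)
    _ = 1 - p + p * Real.exp l := by
        have hint1 : Integrable (fun ω => 1 - Y ω) P := (integrable_const 1).sub hYint
        have hint2 : Integrable (fun ω => Y ω * Real.exp l) P := hYint.mul_const _
        have hc : Integrable (fun _ : Ω => (1:ℝ)) P := integrable_const 1
        rw [integral_add hint1 hint2, integral_sub hc hYint, integral_mul_const]
        simp [hp]
    _ ≤ Real.exp (l * p + l ^ 2 / 8) := hoeffding_aux hp0 hp1 l

lemma chernoff_tails {Ω : Type*} [MeasurableSpace Ω] (P : Measure Ω) [IsProbabilityMeasure P]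
    (Y : ℕ → Ω → ℝ) (hm : ∀ i, Measurable (Y i))
    (hindep : iIndepFun Y P)
    (hv : ∀ i ω, Y i ω ∈ Set.Icc (0:ℝ) 1)
    (μ : ℝ) (hμ : ∀ i, ∫ ω, Y i ω ∂P = μ)
    (s : ℕ) (δ : ℝ) (hδ : 0 ≤ δ) :
    (P {ω | (s:ℝ) * μ + s * δ ≤ ∑ i ∈ Finset.range s, Y i ω}).toReal
        ≤ Real.exp (-2 * s * δ ^ 2) ∧
      (P {ω | ∑ i ∈ Finset.range s, Y i ω ≤ (s:ℝ) * μ - s * δ}).toReal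
        ≤ Real.exp (-2 * s * δ ^ 2) := by
  have hintS : ∀ l : ℝ, Integrable (fun ω => Real.exp (l * (∑ i ∈ Finset.range s, Y i) ω)) P :=
    fun l => hindep.integrable_exp_mul_sum hm
      (fun i _ => exp_integrable P (Y i) (hm i) (hv i) l)
  have hmgf : ∀ l : ℝ, mgf (∑ i ∈ Finset.range s, Y i) P l ≤ Real.exp (s * (l * μ + l ^ 2 / 8)) := by
    intro l
    rw [hindep.mgf_sum hm]
    calc ∏ i ∈ Finset.range s, mgf (Y i) P l
        ≤ ∏ _i ∈ Finset.range s, Real.exp (l * μ + l ^ 2 / 8) := by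
          refine Finset.prod_le_prod (fun i _ => mgf_nonneg) (fun i _ => ?_)
          have := mgf_le_of_Icc P (Y i) (hm i) (hv i) l
          rwa [hμ i] at this
      _ = Real.exp (s * (l * μ + l ^ 2 / 8)) := by
          rw [Finset.prod_const, ← Real.exp_nat_mul, Finset.card_range]
  have hsetU : {ω | (s:ℝ) * μ + s * δ ≤ ∑ i ∈ Finset.range s, Y i ω}
      = {ω | (s:ℝ) * μ + s * δ ≤ (∑ i ∈ Finset.range s, Y i) ω} := by
    simp [Finset.sum_apply]
  have hsetL : {ω | ∑ i ∈ Finset.range s, Y i ω ≤ (s:ℝ) * μ - s * δ}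
      = {ω | (∑ i ∈ Finset.range s, Y i) ω ≤ (s:ℝ) * μ - s * δ} := by
    simp [Finset.sum_apply]
  constructor
  · rw [hsetU]
    calc (P {ω | (s:ℝ) * μ + s * δ ≤ (∑ i ∈ Finset.range s, Y i) ω}).toReal
        ≤ Real.exp (-(4 * δ) * ((s:ℝ) * μ + s * δ)) * mgf (∑ i ∈ Finset.range s, Y i) P (4 * δ) :=
          measure_ge_le_exp_mul_mgf _ (by positivity) (hintS _)
      _ ≤ Real.exp (-(4 * δ) * ((s:ℝ) * μ + s * δ)) * Real.exp (s * (4 * δ * μ + (4 * δ) ^ 2 / 8)) := by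
          exact mul_le_mul_of_nonneg_left (hmgf _) (Real.exp_pos _).le
      _ = Real.exp (-2 * s * δ ^ 2) := by
          rw [← Real.exp_add]; congr 1; ring
  · rw [hsetL]
    calc (P {ω | (∑ i ∈ Finset.range s, Y i) ω ≤ (s:ℝ) * μ - s * δ}).toReal
        ≤ Real.exp (-(-(4 * δ)) * ((s:ℝ) * μ - s * δ)) * mgf (∑ i ∈ Finset.range s, Y i) P (-(4 * δ)) :=
          measure_le_le_exp_mul_mgf _ (by simpa using hδ) (hintS _)
      _ ≤ Real.exp (-(-(4 * δ)) * ((s:ℝ) * μ - s * δ))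
            * Real.exp (s * (-(4 * δ) * μ + (-(4 * δ)) ^ 2 / 8)) := by
          exact mul_le_mul_of_nonneg_left (hmgf _) (Real.exp_pos _).le
      _ = Real.exp (-2 * s * δ ^ 2) := by
          rw [← Real.exp_add]; congr 1; ring

lemma sum_inv_sq_le (T : ℕ) (hT : 1 ≤ T) :
    ∑ t ∈ Finset.Icc 1 T, 1 / (2 * (t:ℝ) ^ 2) ≤ 1 - 1 / (2 * (T:ℝ)) := by
  induction T with
  | zero => omega
  | succ n ih =>
    rcases Nat.lt_or_ge 1 (n+1) with h1 | h1
    · have hn : 1 ≤ n := by omega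
      rw [Finset.sum_Icc_succ_top (by omega : 1 ≤ n + 1)]
      have hrec := ih hn
      have hnr : (1:ℝ) ≤ (n:ℝ) := by exact_mod_cast hn
      have key : 1 / (2 * ((n:ℝ)+1) ^ 2) ≤ 1 / (2 * (n:ℝ)) - 1 / (2 * ((n:ℝ)+1)) := by
        rw [div_sub_div _ _ (by positivity) (by positivity),
          div_le_div_iff₀ (by positivity) (by positivity)]
        nlinarith
      push_cast
      push_cast at hrec key
      linarith
    · have : n = 0 := by omega
      subst this
      norm_num


/-- For `N ≥ 2`, `T ≥ 1` and, for each arm `a ∈ {1,…,N}`, an i.i.d. sequence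
`(X a s)_{s ≥ 1}` of `[0,1]`-valued random variables with mean `r a`, letting
`r̂_{a,s} = (1/s) ∑_{j=1}^s X a j` (with `r̂_{a,0} = 0`), we have
`∑_{t=1}^T Pr(∃ a ∈ {1,…,N}, ∃ s ∈ {0,…,t−1} : |r a − r̂_{a,s}| > √(3 ln(N t)/(s+1))) ≤ π²/3`. -/
theorem stmt1 {Ω : Type*} [MeasurableSpace Ω] (P : Measure Ω) [IsProbabilityMeasure P]
    (N T : ℕ) (hN : 2 ≤ N) (hT : 1 ≤ T)
    (X : ℕ → ℕ → Ω → ℝ) (r : ℕ → ℝ)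
    (hmeas : ∀ a ∈ Finset.Icc 1 N, ∀ s, Measurable (X a (s + 1)))
    (hindep : ∀ a ∈ Finset.Icc 1 N,
      iIndepFun (fun s : ℕ => X a (s + 1)) P)
    (hident : ∀ a ∈ Finset.Icc 1 N, ∀ s : ℕ,
      IdentDistrib (X a (s + 1)) (X a 1) P P)
    (hval : ∀ a ∈ Finset.Icc 1 N, ∀ s : ℕ, ∀ ω, X a (s + 1) ω ∈ Set.Icc (0 : ℝ) 1)
    (hmean : ∀ a ∈ Finset.Icc 1 N, ∀ s : ℕ, ∫ ω, X a (s + 1) ω ∂P = r a)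
    -- empirical mean of the first `s` samples; for `s = 0` this is `0` (division by zero)
    (rhat : ℕ → ℕ → Ω → ℝ)
    (hrhat : ∀ a s ω, rhat a s ω = (∑ j ∈ Finset.Icc 1 s, X a j ω) / (s : ℝ)) :
    ∑ t ∈ Finset.Icc 1 T,
        (P {ω | ∃ a ∈ Finset.Icc 1 N, ∃ s ∈ Finset.range t,
          Real.sqrt (3 * Real.log ((N : ℝ) * t) / ((s : ℝ) + 1)) < |r a - rhat a s ω|}).toReal
      ≤ Real.pi ^ 2 / 3 := by
  have hNr : (2:ℝ) ≤ (N:ℝ) := by exact_mod_cast hN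
  -- bounds on r a
  have hr01 : ∀ a ∈ Finset.Icc 1 N, 0 ≤ r a ∧ r a ≤ 1 := by
    intro a ha
    have hint : Integrable (X a 1) P := by
      refine Integrable.mono' (integrable_const 1) (hmeas a ha 0).aestronglyMeasurable
        (ae_of_all _ fun ω => ?_)
      have h := hval a ha 0 ω
      rw [Real.norm_eq_abs, abs_le]; constructor <;> [linarith [h.1, h.2]; linarith [h.1, h.2]]
    have h0 : (0:ℝ) ≤ ∫ ω, X a 1 ω ∂P := integral_nonneg fun ω => (hval a ha 0 ω).1
    have h1 : ∫ ω, X a 1 ω ∂P ≤ 1 := by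
      calc ∫ ω, X a 1 ω ∂P ≤ ∫ _, (1:ℝ) ∂P :=
            integral_mono hint (integrable_const 1) fun ω => (hval a ha 0 ω).2
        _ = 1 := by simp
    have := hmean a ha 0
    constructor <;> [linarith [this ▸ h0]; linarith [this ▸ h1]]
  -- the per-t bound
  have main : ∀ t ∈ Finset.Icc 1 T,
      (P {ω | ∃ a ∈ Finset.Icc 1 N, ∃ s ∈ Finset.range t,
          Real.sqrt (3 * Real.log ((N : ℝ) * t) / ((s : ℝ) + 1)) < |r a - rhat a s ω|}).toReal
        ≤ 1 / (2 * (t:ℝ) ^ 2) := by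
    intro t ht
    have ht1 : 1 ≤ t := (Finset.mem_Icc.mp ht).1
    have htr : (1:ℝ) ≤ (t:ℝ) := by exact_mod_cast ht1
    set L := Real.log ((N:ℝ) * t) with hLdef
    have hNt2 : (2:ℝ) ≤ (N:ℝ) * t := by nlinarith
    have hNt0 : (0:ℝ) < (N:ℝ) * t := by linarith
    have hL2 : Real.log 2 ≤ L := Real.log_le_log (by norm_num) hNt2
    have hL0 : 0 < L := lt_of_lt_of_le (Real.log_pos (by norm_num)) hL2
    -- the individual events
    set A : ℕ → ℕ → Set Ω := fun a s =>
      {ω | Real.sqrt (3 * L / ((s : ℝ) + 1)) < |r a - rhat a s ω|} with hAdef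
    -- union bound
    have hsub : {ω | ∃ a ∈ Finset.Icc 1 N, ∃ s ∈ Finset.range t,
        Real.sqrt (3 * Real.log ((N : ℝ) * t) / ((s : ℝ) + 1)) < |r a - rhat a s ω|}
        ⊆ ⋃ a ∈ Finset.Icc 1 N, ⋃ s ∈ Finset.range t, A a s := by
      intro ω hω
      obtain ⟨a, ha, s, hs, h⟩ := hω
      exact Set.mem_biUnion ha (Set.mem_biUnion hs h)
    -- per-(a,s) bound
    have hA : ∀ a ∈ Finset.Icc 1 N, ∀ s ∈ Finset.range t,
        (P (A a s)).toReal ≤ 2 * Real.exp (-3 * L) := by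
      intro a ha s hs
      rcases Nat.eq_zero_or_pos s with rfl | hs1
      · have : A a 0 = ∅ := by
          ext ω
          simp only [hAdef, Set.mem_setOf_eq, Set.mem_empty_iff_false, iff_false, not_lt]
          have h0 : rhat a 0 ω = 0 := by simp [hrhat]
          rw [h0, sub_zero]
          have hra := hr01 a ha
          have habs : |r a| ≤ 1 := by rw [abs_le]; exact ⟨by linarith [hra.1], hra.2⟩
          have h1lt : (1:ℝ) < Real.sqrt (3 * L / ((0:ℕ) + 1)) := by
            rw [Real.lt_sqrt (by norm_num)]
            push_cast
            rw [show ((0:ℝ) + 1) = 1 by norm_num, div_one]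
            nlinarith [Real.log_two_gt_d9]
          linarith
        rw [this]
        simp only [measure_empty, ENNReal.toReal_zero]
        positivity
      · -- main Chernoff case
        set δ := Real.sqrt (3 * L / ((s : ℝ) + 1)) with hδdef
        have hsr : (1:ℝ) ≤ (s:ℝ) := by exact_mod_cast hs1
        have hs0 : (0:ℝ) < (s:ℝ) := by linarith
        have hδsq : δ ^ 2 = 3 * L / ((s:ℝ) + 1) := Real.sq_sqrt (by positivity)
        have hδ0 : 0 ≤ δ := Real.sqrt_nonneg _
        -- rewrite rhat via range sums
        have hsum : ∀ ω, ∑ j ∈ Finset.Icc 1 s, X a j ω = ∑ i ∈ Finset.range s, X a (i+1) ω := by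
          intro ω
          rw [← Finset.Ico_add_one_right_eq_Icc, Finset.sum_Ico_eq_sum_range]
          simp [Nat.add_comm]
        have hCher := chernoff_tails P (fun i => X a (i+1)) (hmeas a ha) (hindep a ha)
          (hval a ha) (r a) (hmean a ha) s δ hδ0
        have hsubA : A a s ⊆
            {ω | (s:ℝ) * r a + s * δ ≤ ∑ i ∈ Finset.range s, X a (i+1) ω}
            ∪ {ω | ∑ i ∈ Finset.range s, X a (i+1) ω ≤ (s:ℝ) * r a - s * δ} := by
          intro ω hω
          simp only [hAdef, Set.mem_setOf_eq] at hω
          rw [hrhat, hsum ω] at hω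
          set S := ∑ i ∈ Finset.range s, X a (i+1) ω with hSdef
          rcases lt_abs.mp hω with h | h
          · right
            simp only [Set.mem_setOf_eq, ← hSdef]
            have : δ * s < (r a - S / s) * s := by
              apply mul_lt_mul_of_pos_right h hs0
            rw [sub_mul, div_mul_cancel₀ _ hs0.ne'] at this
            linarith
          · left
            simp only [Set.mem_setOf_eq, ← hSdef]
            have : δ * s < (S / s - r a) * s := by
              have := mul_lt_mul_of_pos_right h hs0
              rw [neg_sub] at this
              exact this
            rw [sub_mul, div_mul_cancel₀ _ hs0.ne'] at this
            linarith
        have hmeasU : P (A a s) ≤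
            P {ω | (s:ℝ) * r a + s * δ ≤ ∑ i ∈ Finset.range s, X a (i+1) ω}
            + P {ω | ∑ i ∈ Finset.range s, X a (i+1) ω ≤ (s:ℝ) * r a - s * δ} :=
          le_trans (measure_mono hsubA) (measure_union_le _ _)
        have hfin1 : P {ω | (s:ℝ) * r a + s * δ ≤ ∑ i ∈ Finset.range s, X a (i+1) ω} ≠ ⊤ :=
          (measure_lt_top _ _).ne
        have hfin2 : P {ω | ∑ i ∈ Finset.range s, X a (i+1) ω ≤ (s:ℝ) * r a - s * δ} ≠ ⊤ :=
          (measure_lt_top _ _).ne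
        have htoReal : (P (A a s)).toReal ≤
            (P {ω | (s:ℝ) * r a + s * δ ≤ ∑ i ∈ Finset.range s, X a (i+1) ω}).toReal
            + (P {ω | ∑ i ∈ Finset.range s, X a (i+1) ω ≤ (s:ℝ) * r a - s * δ}).toReal := by
          rw [← ENNReal.toReal_add hfin1 hfin2]
          exact ENNReal.toReal_mono (by simp [ENNReal.add_ne_top, hfin1, hfin2]) hmeasU
        have hexp : Real.exp (-2 * s * δ ^ 2) ≤ Real.exp (-3 * L) := by
          apply Real.exp_le_exp.mpr
          rw [hδsq]
          have key : 3 * L ≤ 6 * (s:ℝ) * L / ((s:ℝ) + 1) := by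
            rw [le_div_iff₀ (by positivity)]
            nlinarith
          have heq : -2 * (s:ℝ) * (3 * L / ((s:ℝ) + 1)) = -(6 * (s:ℝ) * L / ((s:ℝ) + 1)) := by
            ring
          rw [heq]
          linarith
        calc (P (A a s)).toReal ≤ _ + _ := htoReal
          _ ≤ Real.exp (-2 * s * δ ^ 2) + Real.exp (-2 * s * δ ^ 2) :=
              add_le_add hCher.1 hCher.2
          _ = 2 * Real.exp (-2 * s * δ ^ 2) := by ring
          _ ≤ 2 * Real.exp (-3 * L) := by linarith [hexp]
    -- sum up
    have hunion : (P {ω | ∃ a ∈ Finset.Icc 1 N, ∃ s ∈ Finset.range t,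
        Real.sqrt (3 * Real.log ((N : ℝ) * t) / ((s : ℝ) + 1)) < |r a - rhat a s ω|})
        ≤ ∑ a ∈ Finset.Icc 1 N, ∑ s ∈ Finset.range t, P (A a s) := by
      refine le_trans (measure_mono hsub) ?_
      refine le_trans (measure_biUnion_finset_le _ _) ?_
      exact Finset.sum_le_sum fun a _ => measure_biUnion_finset_le _ _
    have hfin : ∀ a ∈ Finset.Icc 1 N, ∀ s ∈ Finset.range t, P (A a s) ≠ ⊤ :=
      fun a _ s _ => (measure_lt_top _ _).ne
    have hsum_ne : (∑ a ∈ Finset.Icc 1 N, ∑ s ∈ Finset.range t, P (A a s)) ≠ ⊤ := by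
      refine (ENNReal.sum_lt_top.mpr fun a ha => ?_).ne
      exact ENNReal.sum_lt_top.mpr fun s hs => (measure_lt_top _ _)
    have step1 : (P {ω | ∃ a ∈ Finset.Icc 1 N, ∃ s ∈ Finset.range t,
        Real.sqrt (3 * Real.log ((N : ℝ) * t) / ((s : ℝ) + 1)) < |r a - rhat a s ω|}).toReal
        ≤ ∑ a ∈ Finset.Icc 1 N, ∑ s ∈ Finset.range t, (P (A a s)).toReal := by
      refine le_trans (ENNReal.toReal_mono hsum_ne hunion) ?_
      rw [ENNReal.toReal_sum (fun a ha => ?_)]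
      · refine Finset.sum_le_sum fun a ha => ?_
        rw [ENNReal.toReal_sum (fun s hs => (measure_lt_top _ _).ne)]
      · exact (ENNReal.sum_lt_top.mpr fun s hs => measure_lt_top _ _).ne
    have step2 : ∑ a ∈ Finset.Icc 1 N, ∑ s ∈ Finset.range t, (P (A a s)).toReal
        ≤ (N:ℝ) * t * (2 * Real.exp (-3 * L)) := by
      calc ∑ a ∈ Finset.Icc 1 N, ∑ s ∈ Finset.range t, (P (A a s)).toReal
          ≤ ∑ _a ∈ Finset.Icc 1 N, ∑ _s ∈ Finset.range t, 2 * Real.exp (-3 * L) := by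
            refine Finset.sum_le_sum fun a ha => Finset.sum_le_sum fun s hs => hA a ha s hs
        _ = (N:ℝ) * t * (2 * Real.exp (-3 * L)) := by
            rw [Finset.sum_const, Finset.sum_const, Nat.card_Icc, Finset.card_range]
            simp only [nsmul_eq_mul]
            push_cast
            ring
    have hexpL : Real.exp (-3 * L) = 1 / ((N:ℝ) * t) ^ 3 := by
      rw [show (-3:ℝ) * L = -((3:ℕ) * L) by push_cast; ring, Real.exp_neg,
        Real.exp_nat_mul, Real.exp_log hNt0]
      rw [one_div]
    have step3 : (N:ℝ) * t * (2 * Real.exp (-3 * L)) ≤ 1 / (2 * (t:ℝ) ^ 2) := by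
      rw [hexpL]
      have h1 : (N:ℝ) * t * (2 * (1 / ((N:ℝ) * t) ^ 3)) = 2 / (((N:ℝ) * t) ^ 2) := by
        field_simp
      rw [h1, div_le_div_iff₀ (by positivity) (by positivity)]
      have hkey : (0:ℝ) ≤ (((N:ℝ) - 2) * ((N:ℝ) + 2)) * (t:ℝ) ^ 2 :=
        mul_nonneg (mul_nonneg (by linarith) (by linarith)) (sq_nonneg _)
      nlinarith [hkey]
    linarith [step1, step2, step3]
  calc ∑ t ∈ Finset.Icc 1 T, (P {ω | ∃ a ∈ Finset.Icc 1 N, ∃ s ∈ Finset.range t,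
          Real.sqrt (3 * Real.log ((N : ℝ) * t) / ((s : ℝ) + 1)) < |r a - rhat a s ω|}).toReal
      ≤ ∑ t ∈ Finset.Icc 1 T, 1 / (2 * (t:ℝ) ^ 2) := Finset.sum_le_sum main
    _ ≤ 1 - 1 / (2 * (T:ℝ)) := sum_inv_sq_le T hT
    _ ≤ 1 := by
        have : (0:ℝ) < (T:ℝ) := by exact_mod_cast hT
        have : 0 < 1 / (2 * (T:ℝ)) := by positivity
        linarith
    _ ≤ Real.pi ^ 2 / 3 := by nlinarith [Real.pi_gt_three]
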